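/- Let a > 0, b ≥ 0, c > 0, σB > 0, σE > 0 be reals, and define C(P) = log2(1 + aP/σB²) − log2(1 + bP/(cP + σE²)) for P ≥ 0. If b/a ≤ σE²/σB², then C is monotone nondecreasing on [0, ∞). -/

import Mathlib

open Real Set

theorem stmt_0 (a b c σB σE : ℝ) (ha : 0 < a) (hb : 0 ≤ b) (hc : 0 < c)
    (hσB : 0 < σB) (hσE : 0 < σE)
    (hcond : b / a ≤ σE ^ 2 / σB ^ 2) :
    MonotoneOn (fun P : ℝ =>
      Real.logb 2 (1 + a * P / σB ^ 2) - Real.logb 2 (1 + b * P / (c * P + σE ^ 2)))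
      (Set.Ici (0 : ℝ)) := by
  have hcond' : b * σB ^ 2 ≤ a * σE ^ 2 := by
    rw [div_le_div_iff₀ ha (by positivity)] at hcond
    linarith
  intro x hx y hy hxy
  simp only [Set.mem_Ici] at hx hy
  have hdx : (0:ℝ) < c * x + σE ^ 2 := by positivity
  have hdy : (0:ℝ) < c * y + σE ^ 2 := by positivity
  have hgx : (0:ℝ) < 1 + a * x / σB ^ 2 := by positivity
  have hgy : (0:ℝ) < 1 + a * y / σB ^ 2 := by positivity
  have hhx : (0:ℝ) < 1 + b * x / (c * x + σE ^ 2) := by positivity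
  have hhy : (0:ℝ) < 1 + b * y / (c * y + σE ^ 2) := by positivity
  have key : (1 + a * x / σB ^ 2) * (1 + b * y / (c * y + σE ^ 2)) ≤
      (1 + a * y / σB ^ 2) * (1 + b * x / (c * x + σE ^ 2)) := by
    rw [div_le_div_iff₀ ha (by positivity)] at hcond
    field_simp
    have ht : 0 ≤ y - x := sub_nonneg.mpr hxy
    have hcd : 0 ≤ a * σE ^ 2 - b * σB ^ 2 := sub_nonneg.mpr hcond'
    have h0 : 0 ≤ σB ^ 2 * ((y - x) * (a * c ^ 2 * x * y)) :=
      mul_nonneg (by positivity) (mul_nonneg ht (by positivity))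
    have h1 : 0 ≤ σB ^ 2 * ((y - x) * (a * c * σE ^ 2 * (x + y))) :=
      mul_nonneg (by positivity) (mul_nonneg ht (by positivity))
    have h2 : 0 ≤ σB ^ 2 * ((y - x) * (σE ^ 2 * (a * σE ^ 2 - b * σB ^ 2))) :=
      mul_nonneg (by positivity) (mul_nonneg ht (mul_nonneg (by positivity) hcd))
    have h3 : 0 ≤ σB ^ 2 * ((y - x) * (a * b * c * x * y)) :=
      mul_nonneg (by positivity) (mul_nonneg ht (by positivity))
    nlinarith [h0, h1, h2, h3, pow_pos hσB 2]
  have hlog := (Real.logb_le_logb one_lt_two (by positivity) (by positivity)).mpr key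
  rw [Real.logb_mul hgx.ne' hhy.ne', Real.logb_mul hgy.ne' hhx.ne'] at hlog
  simp only
  linarith
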